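/- Let φ ∈ X + X²ℂ[[X]] and ν ∈ ℂ with ν ≠ 0, and write exp(u) := Σ_{k≥0} uᵏ/k! for any u ∈ ℂ[[X]] with zero constant term. Let h ∈ X + X²ℂ[[X]] be the compositional inverse of X·exp(−φ) (i.e. (X·exp(−φ))∘h = X). Then the identity h = h'·X·exp((1/ν)·(φ∘(−νX))) (i.e. 𝔗Q(X·e^{−φ(X)}) = X·e^{(1/ν)φ(−νX)}) holds if and only if for every m ∈ ℕ: coeff_m(exp(−(1/ν)·(φ∘(−νX)))) = Σ_{n=0}^{m} (mⁿ/n!)·coeff_m(φⁿ), with the convention 0⁰ = 1. (In the paper's notation: e^{−(1/ν)φ_ν(−νx)} = Σ_{n≥0} (x·d/dx)ⁿ(φ_ν(x))ⁿ/n!.) -/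

import Mathlib

open PowerSeries Finset

/-- Composition `f ∘ g` of formal power series (intended for `g` with zero constant
term). -/
noncomputable def pcomp (f g : PowerSeries ℂ) : PowerSeries ℂ :=
  PowerSeries.mk fun n => ∑ k ∈ range (n + 1), coeff k f * coeff n (g ^ k)

/-- Formal exponential `exp(u) = Σ_{k≥0} uᵏ/k!` of a power series `u` with zero
constant term. -/
noncomputable def pexp (u : PowerSeries ℂ) : PowerSeries ℂ :=
  pcomp (PowerSeries.exp ℂ) u

lemma coeff_pcomp (f g : PowerSeries ℂ) (n : ℕ) :
    coeff n (pcomp f g) = ∑ k ∈ range (n + 1), coeff k f * coeff n (g ^ k) :=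
  coeff_mk _ _

lemma coeff_pow_eq_zero' {g : PowerSeries ℂ} (hg : constantCoeff g = 0)
    {n k : ℕ} (hnk : n < k) : coeff n (g ^ k) = 0 := by
  have h1 : (X : PowerSeries ℂ) ^ k ∣ g ^ k :=
    pow_dvd_pow_of_dvd (X_dvd_iff.mpr hg) k
  exact X_pow_dvd_iff.mp h1 n hnk

lemma coeff_pcomp_of_lt {g : PowerSeries ℂ} (hg : constantCoeff g = 0)
    (f : PowerSeries ℂ) {n N : ℕ} (hN : n < N) :
    coeff n (pcomp f g) = ∑ k ∈ range N, coeff k f * coeff n (g ^ k) := by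
  rw [coeff_pcomp]
  apply Finset.sum_subset (range_subset_range.mpr hN)
  intro k hk hk'
  have hnk : n < k := by
    simp only [mem_range] at hk hk'; omega
  rw [coeff_pow_eq_zero' hg hnk, mul_zero]

lemma coeff_pcomp_aeval {g : PowerSeries ℂ} (hg : constantCoeff g = 0)
    (f : PowerSeries ℂ) {n N : ℕ} (hN : n < N) :
    coeff n (pcomp f g) = coeff n (Polynomial.aeval g (trunc N f)) := by
  obtain ⟨M, rfl⟩ : ∃ M, N = M + 1 := ⟨N - 1, by omega⟩
  rw [Polynomial.aeval_eq_sum_range' (natDegree_trunc_lt f M) , map_sum,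
    coeff_pcomp_of_lt hg f hN]
  refine Finset.sum_congr rfl fun k hk => ?_
  rw [map_smul, coeff_trunc, if_pos (mem_range.mp hk), smul_eq_mul]

lemma coeff_aeval_eq_zero {g : PowerSeries ℂ} (hg : constantCoeff g = 0)
    {p : Polynomial ℂ} {n : ℕ} (hp : ∀ k ≤ n, p.coeff k = 0) :
    coeff n (Polynomial.aeval g p) = 0 := by
  have h1 : (Polynomial.X : Polynomial ℂ) ^ (n + 1) ∣ p :=
    Polynomial.X_pow_dvd_iff.mpr fun d hd => hp d (by omega)
  obtain ⟨q, rfl⟩ := h1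
  rw [map_mul, map_pow, Polynomial.aeval_X]
  have h2 : (X : PowerSeries ℂ) ^ (n + 1) ∣ g ^ (n + 1) * Polynomial.aeval g q :=
    Dvd.dvd.mul_right (pow_dvd_pow_of_dvd (X_dvd_iff.mpr hg) _) _
  exact X_pow_dvd_iff.mp h2 n (lt_add_one n)

lemma pcomp_mul {g : PowerSeries ℂ} (hg : constantCoeff g = 0)
    (f₁ f₂ : PowerSeries ℂ) :
    pcomp (f₁ * f₂) g = pcomp f₁ g * pcomp f₂ g := by
  ext n
  rw [coeff_pcomp_aeval hg _ (lt_add_one n), PowerSeries.coeff_mul]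
  have step : ∑ p ∈ antidiagonal n, coeff p.1 (pcomp f₁ g) * coeff p.2 (pcomp f₂ g)
      = coeff n (Polynomial.aeval g (trunc (n + 1) f₁) *
          Polynomial.aeval g (trunc (n + 1) f₂)) := by
    rw [PowerSeries.coeff_mul]
    refine Finset.sum_congr rfl fun p hp => ?_
    have hmem := mem_antidiagonal.mp hp
    rw [coeff_pcomp_aeval hg f₁ (show p.1 < n + 1 by omega),
      coeff_pcomp_aeval hg f₂ (show p.2 < n + 1 by omega)]
  rw [step, ← map_mul]
  have hdiff : ∀ k ≤ n,
      (trunc (n + 1) (f₁ * f₂) - trunc (n + 1) f₁ * trunc (n + 1) f₂).coeff k = 0 := by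
    intro k hk
    rw [Polynomial.coeff_sub, Polynomial.coeff_mul, coeff_trunc, if_pos (by omega),
      PowerSeries.coeff_mul, sub_eq_zero]
    refine Finset.sum_congr rfl fun p hp => ?_
    have hmem := mem_antidiagonal.mp hp
    rw [coeff_trunc, coeff_trunc, if_pos (by omega), if_pos (by omega)]
  have hz := coeff_aeval_eq_zero hg hdiff
  rw [map_sub, map_sub, sub_eq_zero] at hz
  exact hz

lemma pcomp_one {g : PowerSeries ℂ} (hg : constantCoeff g = 0) :
    pcomp 1 g = 1 := by
  ext n
  rw [coeff_pcomp, Finset.sum_eq_single 0]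
  · simp
  · intro k _ hk0
    rw [coeff_one, if_neg hk0, zero_mul]
  · intro hn; exact absurd (mem_range.mpr (by omega)) hn

lemma pcomp_X {g : PowerSeries ℂ} (hg : constantCoeff g = 0) :
    pcomp X g = g := by
  ext n
  rw [coeff_pcomp]
  rcases Nat.eq_zero_or_pos n with rfl | hn
  · simp [coeff_zero_eq_constantCoeff, hg]
  · rw [Finset.sum_eq_single 1]
    · simp
    · intro k _ hk1
      rw [coeff_X, if_neg hk1, zero_mul]
    · intro hn1; exact absurd (mem_range.mpr (by omega)) hn1

lemma pcomp_pow {g : PowerSeries ℂ} (hg : constantCoeff g = 0)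
    (f : PowerSeries ℂ) (k : ℕ) : pcomp (f ^ k) g = pcomp f g ^ k := by
  induction k with
  | zero => simpa using pcomp_one hg
  | succ k ih => rw [pow_succ, pow_succ, pcomp_mul hg, ih]

lemma pexp_neg_eq (w : PowerSeries ℂ) :
    pexp (-w) = pcomp (rescale (-1) (PowerSeries.exp ℂ)) w := by
  ext n
  rw [pexp, coeff_pcomp, coeff_pcomp]
  refine Finset.sum_congr rfl fun k _ => ?_
  have hneg : (-w) ^ k = C ((-1) ^ k) * w ^ k := by
    rw [neg_pow, map_pow, map_neg, map_one]
  rw [hneg, coeff_C_mul, coeff_rescale]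
  ring

lemma pexp_mul_pexp_neg (w : PowerSeries ℂ) (hw : constantCoeff w = 0) :
    pexp w * pexp (-w) = 1 := by
  rw [pexp_neg_eq, pexp, ← pcomp_mul hw]
  have hexp : PowerSeries.exp ℂ * rescale (-1) (PowerSeries.exp ℂ) = 1 :=
    PowerSeries.exp_mul_exp_neg_eq_one
  rw [hexp, pcomp_one hw]

lemma coeff_mul_congr {A A' B : PowerSeries ℂ} {n : ℕ}
    (hA : ∀ j ≤ n, coeff j A = coeff j A') :
    coeff n (A * B) = coeff n (A' * B) := by
  rw [PowerSeries.coeff_mul, PowerSeries.coeff_mul]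
  refine Finset.sum_congr rfl fun p hp => ?_
  have hmem := mem_antidiagonal.mp hp
  rw [hA p.1 (by omega)]

lemma residue_core (u v : PowerSeries ℂ) (huv : u * v = 1) (s : ℕ) :
    coeff s (v ^ (s + 1) * d⁄dX ℂ (X * u)) = if s = 0 then 1 else 0 := by
  have hD : d⁄dX ℂ (X * u) = u + X * d⁄dX ℂ u := by
    rw [Derivation.leibniz]
    simp only [smul_eq_mul, derivative_X, mul_one]
    ring
  have hsplit : v ^ (s + 1) * d⁄dX ℂ (X * u) = v ^ s + X * (v ^ (s + 1) * d⁄dX ℂ u) := by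
    rw [hD]
    have hvu : v ^ (s + 1) * u = v ^ s := by
      rw [pow_succ, mul_assoc, mul_comm v u, huv, mul_one]
    calc v ^ (s + 1) * (u + X * d⁄dX ℂ u)
        = v ^ (s + 1) * u + X * (v ^ (s + 1) * d⁄dX ℂ u) := by ring
      _ = v ^ s + X * (v ^ (s + 1) * d⁄dX ℂ u) := by rw [hvu]
  rw [hsplit]
  rcases Nat.eq_zero_or_pos s with rfl | hs
  · simp [coeff_zero_eq_constantCoeff]
  · rw [if_neg (by omega), map_add]
    have hdv : d⁄dX ℂ v = -(v ^ 2 * d⁄dX ℂ u) := by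
      have h0 : d⁄dX ℂ (u * v) = 0 := by rw [huv]; simp
      rw [Derivation.leibniz, smul_eq_mul, smul_eq_mul] at h0
      have h1 : v * (u * d⁄dX ℂ v) + v * (v * d⁄dX ℂ u) = 0 := by
        rw [← mul_add, h0, mul_zero]
      have h2 : v * u = 1 := by rw [mul_comm]; exact huv
      calc d⁄dX ℂ v = v * u * d⁄dX ℂ v := by rw [h2, one_mul]
        _ = -(v ^ 2 * d⁄dX ℂ u) := by linear_combination h1
    obtain ⟨t, rfl⟩ : ∃ t, s = t + 1 := ⟨s - 1, by omega⟩
    have hpow : d⁄dX ℂ (v ^ (t + 1)) = C (-((t : ℂ) + 1)) * (v ^ (t + 1 + 1) * d⁄dX ℂ u) := by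
      rw [Derivation.leibniz_pow, hdv]
      simp only [Nat.add_sub_cancel, smul_eq_mul, nsmul_eq_mul]
      rw [← map_natCast C (t + 1), map_neg]
      rw [show ((t + 1 : ℕ) : ℂ) = (t : ℂ) + 1 by push_cast; ring]
      ring
    have hXc : coeff (t + 1) (X * (v ^ (t + 1 + 1) * d⁄dX ℂ u))
        = coeff t (v ^ (t + 1 + 1) * d⁄dX ℂ u) := by
      have := PowerSeries.coeff_X_pow_mul (v ^ (t + 1 + 1) * d⁄dX ℂ u) 1 t
      simpa [pow_one, Nat.add_comm] using this
    have h3 := congrArg (coeff t) hpow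
    rw [PowerSeries.coeff_derivative, coeff_C_mul] at h3
    push_cast at h3
    have ht1 : ((t : ℂ) + 1) ≠ 0 := Nat.cast_add_one_ne_zero t
    rw [hXc]
    have hkey : ((t : ℂ) + 1) * (coeff (t + 1) (v ^ (t + 1))
        + coeff t (v ^ (t + 1 + 1) * d⁄dX ℂ u)) = 0 := by
      linear_combination h3
    exact (mul_eq_zero.mp hkey).resolve_left ht1

lemma residue_key (u v P : PowerSeries ℂ) (huv : u * v = 1) (r : ℕ) :
    coeff r (v ^ (r + 1) * pcomp P (X * u) * d⁄dX ℂ (X * u)) = coeff r P := by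
  have hg : constantCoeff (X * u) = 0 := by
    simp [map_mul]
  have hre : v ^ (r + 1) * pcomp P (X * u) * d⁄dX ℂ (X * u)
      = pcomp P (X * u) * (v ^ (r + 1) * d⁄dX ℂ (X * u)) := by ring
  rw [hre, coeff_mul_congr
    (fun j hj => coeff_pcomp_aeval hg P (show j < r + 1 by omega))]
  rw [Polynomial.aeval_eq_sum_range' (natDegree_trunc_lt P r), Finset.sum_mul, map_sum]
  have hterm : ∀ i ∈ range (r + 1),
      coeff r ((trunc (r + 1) P).coeff i • (X * u) ^ i *
        (v ^ (r + 1) * d⁄dX ℂ (X * u)))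
      = if i = r then coeff r P else 0 := by
    intro i hi
    have hi' : i ≤ r := by have := mem_range.mp hi; omega
    rw [smul_mul_assoc, map_smul, smul_eq_mul, coeff_trunc, if_pos (mem_range.mp hi)]
    have hmono : (X * u) ^ i * (v ^ (r + 1) * d⁄dX ℂ (X * u))
        = X ^ i * (v ^ (r - i + 1) * d⁄dX ℂ (X * u)) := by
      have hrsplit : r + 1 = i + (r - i + 1) := by omega
      rw [hrsplit, pow_add, mul_pow]
      have huvi : u ^ i * v ^ i = 1 := by rw [← mul_pow, huv, one_pow]
      calc X ^ i * u ^ i * (v ^ i * v ^ (r - i + 1) * d⁄dX ℂ (X * u))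
          = X ^ i * ((u ^ i * v ^ i) * (v ^ (r - i + 1) * d⁄dX ℂ (X * u))) := by ring
        _ = X ^ i * (v ^ (r - i + 1) * d⁄dX ℂ (X * u)) := by rw [huvi, one_mul]
    rw [hmono]
    have hshift : coeff r (X ^ i * (v ^ (r - i + 1) * d⁄dX ℂ (X * u)))
        = coeff (r - i) (v ^ (r - i + 1) * d⁄dX ℂ (X * u)) := by
      have := PowerSeries.coeff_X_pow_mul (v ^ (r - i + 1) * d⁄dX ℂ (X * u)) i (r - i)
      rw [show r - i + i = r by omega] at this
      exact this
    rw [hshift, residue_core u v huv (r - i)]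
    by_cases hir : i = r
    · subst hir; simp
    · rw [if_neg (by omega), if_neg hir, mul_zero]
  rw [Finset.sum_congr rfl hterm,
    Finset.sum_ite_eq' (range (r + 1)) r (fun _ => coeff r P)]
  simp

lemma coeff_W_pow (φ : PowerSeries ℂ) (hφ0 : constantCoeff φ = 0) (m : ℕ) :
    coeff m (pexp φ ^ m) =
      ∑ n ∈ range (m + 1), ((m : ℂ) ^ n / (n.factorial : ℂ)) * coeff m (φ ^ n) := by
  rw [pexp, ← pcomp_pow hφ0, PowerSeries.exp_pow_eq_rescale_exp, coeff_pcomp]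
  refine Finset.sum_congr rfl fun k _ => ?_
  rw [coeff_rescale, PowerSeries.coeff_exp, eq_ratCast]
  push_cast
  ring

/-- **Observation 1.7.** Let `φ ∈ X + X²ℂ[[X]]`, `ν ≠ 0`, and let `h` be the
compositional inverse of `X·exp(−φ)`.  Then the identity
`𝔗Q(X·e^{−φ(X)}) = X·e^{(1/ν)φ(−νX)}` (i.e. `h = h'·X·exp((1/ν)·φ(−νX))`) holds
iff `e^{−(1/ν)φ(−νX)} = Σ_{n≥0} (X·d/dX)ⁿ(φ(X))ⁿ/n!`, i.e. iff for every `m`,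
`coeff_m exp(−(1/ν)·φ(−νX)) = Σ_{n=0}^{m} (mⁿ/n!)·coeff_m(φⁿ)` (with `0⁰ = 1`). -/
theorem statement13 (φ : PowerSeries ℂ)
    (hφ0 : coeff 0 φ = 0) (hφ1 : coeff 1 φ = 1)
    (ν : ℂ) (hν : ν ≠ 0)
    (h : PowerSeries ℂ)
    (hh0 : coeff 0 h = 0) (hh1 : coeff 1 h = 1)
    (hinv : pcomp (X * pexp (-φ)) h = X) :
    (h = d⁄dX ℂ h * (X * pexp (C (1 / ν) * rescale (-ν) φ))) ↔
      ∀ m : ℕ,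
        coeff m (pexp (C (-(1 / ν)) * rescale (-ν) φ)) =
          ∑ n ∈ range (m + 1), ((m : ℂ) ^ n / (n.factorial : ℂ)) * coeff m (φ ^ n) := by
  have hφ0' : constantCoeff φ = 0 := by rw [← coeff_zero_eq_constantCoeff_apply]; exact hφ0
  have hh0' : constantCoeff h = 0 := by rw [← coeff_zero_eq_constantCoeff_apply]; exact hh0
  have hne : h ≠ 0 := by
    intro h0
    rw [h0] at hh1
    simp at hh1
  set W := pexp φ with hWdef
  set E := pcomp (pexp (-φ)) h with hEdef
  have hWE : W * pexp (-φ) = 1 := pexp_mul_pexp_neg φ hφ0'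
  have hhE : h * E = X := by
    rw [hEdef, ← hinv, pcomp_mul hh0', pcomp_X hh0']
  set u := pcomp W h with hudef
  have huE : u * E = 1 := by
    rw [hudef, hEdef, ← pcomp_mul hh0', hWE, pcomp_one hh0']
  have hXu : X * u = h := by
    calc X * u = h * E * u := by rw [hhE]
      _ = h * (u * E) := by ring
      _ = h := by rw [huE, mul_one]
  have hmain : ∀ m : ℕ, coeff m (E * d⁄dX ℂ h) = coeff m (W ^ m) := by
    intro m
    have h1 : E * d⁄dX ℂ h = E ^ (m + 1) * pcomp (W ^ m) (X * u) * d⁄dX ℂ (X * u) := by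
      rw [hXu, pcomp_pow hh0', ← hudef]
      calc E * d⁄dX ℂ h = E * (u * E) ^ m * d⁄dX ℂ h := by rw [huE, one_pow, mul_one]
        _ = E ^ (m + 1) * u ^ m * d⁄dX ℂ h := by ring
    rw [h1, residue_key u E (W ^ m) huE m]
  set ψ := C (1 / ν) * rescale (-ν) φ with hψdef
  have hψ0 : constantCoeff ψ = 0 := by
    rw [hψdef, map_mul, constantCoeff_C, ← coeff_zero_eq_constantCoeff_apply,
      coeff_rescale, hφ0]
    ring
  have hnegψ : C (-(1 / ν)) * rescale (-ν) φ = -ψ := by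
    rw [hψdef, map_neg, neg_mul]
  have hψinv : pexp ψ * pexp (-ψ) = 1 := pexp_mul_pexp_neg ψ hψ0
  constructor
  · intro hL m
    have hP : pexp (-ψ) = E * d⁄dX ℂ h := by
      have step : h * pexp (-ψ) = h * (E * d⁄dX ℂ h) := by
        calc h * pexp (-ψ) = d⁄dX ℂ h * (X * pexp ψ) * pexp (-ψ) := by rw [← hL]
          _ = X * d⁄dX ℂ h * (pexp ψ * pexp (-ψ)) := by ring
          _ = X * d⁄dX ℂ h := by rw [hψinv, mul_one]
          _ = h * E * d⁄dX ℂ h := by rw [hhE]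
          _ = h * (E * d⁄dX ℂ h) := by ring
      exact mul_left_cancel₀ hne step
    rw [hnegψ, hP, hmain m, coeff_W_pow φ hφ0' m]
  · intro hR
    have hP : pexp (-ψ) = E * d⁄dX ℂ h := by
      ext m
      have hRm := hR m
      rw [hnegψ] at hRm
      rw [hRm, hmain m, coeff_W_pow φ hφ0' m]
    calc h = h * (pexp ψ * pexp (-ψ)) := by rw [hψinv, mul_one]
      _ = h * pexp (-ψ) * pexp ψ := by ring
      _ = h * (E * d⁄dX ℂ h) * pexp ψ := by rw [hP]
      _ = h * E * d⁄dX ℂ h * pexp ψ := by ring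
      _ = X * d⁄dX ℂ h * pexp ψ := by rw [hhE]
      _ = d⁄dX ℂ h * (X * pexp ψ) := by ring
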